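/- Let H₁ = (1,0,0,0), H₂ = (1, 0, 2√3/7, 1/7), H₃ = (1, 2√3/7, 0, 1/7) in ℝ⁴, and for i ≠ j set d_{ij} = arccosh( −⟨H_i,H_j⟩ / √(⟨H_i,H_i⟩⟨H_j,H_j⟩) ) and L_{ij} = 2 sinh(d_{ij}/2). Then cosh d_{12} = cosh d_{13} = 7/6 and cosh d_{23} = 4/3, hence L_{12} = L_{13} = 1/√3 and L_{23} = √(2/3); these satisfy L_{12}² + L_{13}² = L_{23}², and the Euclidean area of a triangle with side lengths 1/√3, 1/√3, √(2/3) is 1/6. (Hence the maximal horoball piece in the fundamental simplex of the Coxeter tiling [3,4,4] has hyperbolic volume 1/12.) -/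

import Mathlib

open Real

/-- The Lorentzian bilinear form `⟨x,y⟩ = −x⁰y⁰ + x¹y¹ + x²y² + x³y³` on `ℝ⁴`. -/
def lor (x y : Fin 4 → ℝ) : ℝ :=
  -(x 0 * y 0) + x 1 * y 1 + x 2 * y 2 + x 3 * y 3

/-- Inverse hyperbolic cosine. -/
noncomputable def arcosh (x : ℝ) : ℝ := Real.log (x + Real.sqrt (x ^ 2 - 1))

/-- Heron's formula for the Euclidean area of a triangle with side lengths `a, b, c`. -/
noncomputable def heronArea (a b c : ℝ) : ℝ :=
  (1 / 4) * Real.sqrt ((a + b + c) * (-a + b + c) * (a - b + c) * (a + b - c))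

lemma cosh_arcosh {x : ℝ} (hx : 1 ≤ x) : Real.cosh (_root_.arcosh x) = x := by
  have hs : Real.sqrt (x ^ 2 - 1) ^ 2 = x ^ 2 - 1 :=
    Real.sq_sqrt (by nlinarith)
  have hs0 : 0 ≤ Real.sqrt (x ^ 2 - 1) := Real.sqrt_nonneg _
  have ht : 0 < x + Real.sqrt (x ^ 2 - 1) := by nlinarith
  rw [_root_.arcosh, Real.cosh_eq, Real.exp_neg, Real.exp_log ht]
  have hinv : (x + Real.sqrt (x ^ 2 - 1))⁻¹ = x - Real.sqrt (x ^ 2 - 1) := by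
    rw [inv_eq_iff_eq_inv, eq_comm, inv_eq_iff_eq_inv] at *
    field_simp
    nlinarith
  rw [hinv]; ring

lemma arcosh_nonneg {x : ℝ} (hx : 1 ≤ x) : 0 ≤ _root_.arcosh x := by
  have hs0 : 0 ≤ Real.sqrt (x ^ 2 - 1) := Real.sqrt_nonneg _
  have : (1:ℝ) ≤ x + Real.sqrt (x ^ 2 - 1) := by linarith
  exact Real.log_nonneg this

lemma two_sinh_half_arcosh {x : ℝ} (hx : 1 ≤ x) :
    2 * Real.sinh (_root_.arcosh x / 2) = Real.sqrt (2 * (x - 1)) := by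
  have h1 : Real.cosh (_root_.arcosh x) = x := _root_.cosh_arcosh hx
  have h2 : Real.cosh (2 * (_root_.arcosh x / 2)) = 2 * Real.sinh (_root_.arcosh x / 2) ^ 2 + 1 := by
    rw [Real.cosh_two_mul, Real.cosh_sq']
    ring
  have h3 : _root_.arcosh x / 2 ≥ 0 := by have := _root_.arcosh_nonneg hx; linarith
  have h4 : 0 ≤ Real.sinh (_root_.arcosh x / 2) := by
    exact Real.sinh_nonneg_iff.2 h3
  have h5 : (2 * Real.sinh (_root_.arcosh x / 2)) ^ 2 = 2 * (x - 1) := by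
    have : Real.cosh (_root_.arcosh x) = 2 * Real.sinh (_root_.arcosh x / 2) ^ 2 + 1 := by
      rw [← h2]; ring_nf
    nlinarith
  rw [← h5, Real.sqrt_sq (by linarith)]

/-- For the points `H₁, H₂, H₃` of the Coxeter simplex `[3,4,4]`,
`cosh d₁₂ = cosh d₁₃ = 7/6`, `cosh d₂₃ = 4/3`, the horospherical side lengths are
`1/√3, 1/√3, √(2/3)` satisfying `L₁₂² + L₁₃² = L₂₃²`, and the Euclidean area of a
triangle with these side lengths is `1/6`. -/
theorem horoball_piece_344 :
    let H₁ : Fin 4 → ℝ := ![1, 0, 0, 0]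
    let H₂ : Fin 4 → ℝ := ![1, 0, 2 * Real.sqrt 3 / 7, 1/7]
    let H₃ : Fin 4 → ℝ := ![1, 2 * Real.sqrt 3 / 7, 0, 1/7]
    let d : (Fin 4 → ℝ) → (Fin 4 → ℝ) → ℝ := fun x y =>
      _root_.arcosh (-(lor x y) / Real.sqrt (lor x x * lor y y))
    let L : (Fin 4 → ℝ) → (Fin 4 → ℝ) → ℝ := fun x y => 2 * Real.sinh (d x y / 2)
    (Real.cosh (d H₁ H₂) = 7/6 ∧ Real.cosh (d H₁ H₃) = 7/6 ∧
      Real.cosh (d H₂ H₃) = 4/3) ∧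
    (L H₁ H₂ = 1 / Real.sqrt 3 ∧ L H₁ H₃ = 1 / Real.sqrt 3 ∧
      L H₂ H₃ = Real.sqrt (2/3)) ∧
    (1 / Real.sqrt 3) ^ 2 + (1 / Real.sqrt 3) ^ 2 = Real.sqrt (2/3) ^ 2 ∧
    heronArea (1 / Real.sqrt 3) (1 / Real.sqrt 3) (Real.sqrt (2/3)) = 1/6 := by
  intro H₁ H₂ H₃ d L
  have h3 : Real.sqrt 3 ^ 2 = 3 := Real.sq_sqrt (by norm_num)
  have h3pos : (0:ℝ) < Real.sqrt 3 := Real.sqrt_pos.2 (by norm_num)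
  have l11 : lor H₁ H₁ = -1 := by simp [lor, H₁]
  have l22 : lor H₂ H₂ = -(36/49) := by
    simp only [lor, H₂, Matrix.cons_val_zero, Matrix.cons_val_one, Matrix.head_cons,
      Matrix.cons_val_two, Matrix.tail_cons, Matrix.cons_val_three]
    nlinarith [h3]
  have l33 : lor H₃ H₃ = -(36/49) := by
    simp only [lor, H₃, Matrix.cons_val_zero, Matrix.cons_val_one, Matrix.head_cons,
      Matrix.cons_val_two, Matrix.tail_cons, Matrix.cons_val_three]
    nlinarith [h3]
  have l12 : lor H₁ H₂ = -1 := by simp [lor, H₁, H₂]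
  have l13 : lor H₁ H₃ = -1 := by simp [lor, H₁, H₃]
  have l23 : lor H₂ H₃ = -(48/49) := by
    simp [lor, H₂, H₃]; norm_num
  have s1 : Real.sqrt (lor H₁ H₁ * lor H₂ H₂) = 6/7 := by
    rw [l11, l22, show (-1:ℝ) * -(36/49) = (6/7)^2 by norm_num, Real.sqrt_sq (by norm_num)]
  have s2 : Real.sqrt (lor H₁ H₁ * lor H₃ H₃) = 6/7 := by
    rw [l11, l33, show (-1:ℝ) * -(36/49) = (6/7)^2 by norm_num, Real.sqrt_sq (by norm_num)]
  have s3 : Real.sqrt (lor H₂ H₂ * lor H₃ H₃) = 36/49 := by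
    rw [l22, l33, show (-(36/49):ℝ) * -(36/49) = (36/49)^2 by norm_num,
      Real.sqrt_sq (by norm_num)]
  have d12 : d H₁ H₂ = _root_.arcosh (7/6) := by
    simp only [d]; rw [l12, s1]; norm_num
  have d13 : d H₁ H₃ = _root_.arcosh (7/6) := by
    simp only [d]; rw [l13, s2]; norm_num
  have d23 : d H₂ H₃ = _root_.arcosh (4/3) := by
    simp only [d]; rw [l23, s3]; norm_num
  have hL12 : L H₁ H₂ = 1 / Real.sqrt 3 := by
    simp only [L, d12]
    rw [two_sinh_half_arcosh (by norm_num)]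
    rw [show (2:ℝ) * (7/6 - 1) = 1/3 by norm_num, one_div, one_div, ← Real.sqrt_inv]
  have hL13 : L H₁ H₃ = 1 / Real.sqrt 3 := by
    simp only [L, d13]
    rw [two_sinh_half_arcosh (by norm_num)]
    rw [show (2:ℝ) * (7/6 - 1) = 1/3 by norm_num, one_div, one_div, ← Real.sqrt_inv]
  have hL23 : L H₂ H₃ = Real.sqrt (2/3) := by
    simp only [L, d23]
    rw [two_sinh_half_arcosh (by norm_num)]
    norm_num
  have hc : Real.sqrt (2/3) ^ 2 = 2/3 := Real.sq_sqrt (by norm_num)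
  refine ⟨⟨?_, ?_, ?_⟩, ⟨hL12, hL13, hL23⟩, ?_, ?_⟩
  · rw [d12, _root_.cosh_arcosh (by norm_num)]
  · rw [d13, _root_.cosh_arcosh (by norm_num)]
  · rw [d23, _root_.cosh_arcosh (by norm_num)]
  · rw [div_pow, h3, hc]; norm_num
  · rw [heronArea]
    have key : (1 / Real.sqrt 3 + 1 / Real.sqrt 3 + Real.sqrt (2/3)) *
        (-(1 / Real.sqrt 3) + 1 / Real.sqrt 3 + Real.sqrt (2/3)) *
        (1 / Real.sqrt 3 - 1 / Real.sqrt 3 + Real.sqrt (2/3)) *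
        (1 / Real.sqrt 3 + 1 / Real.sqrt 3 - Real.sqrt (2/3)) = 4/9 := by
      have h3ne : Real.sqrt 3 ≠ 0 := ne_of_gt h3pos
      have h2m : Real.sqrt 2 * Real.sqrt 2 = 2 := Real.mul_self_sqrt (by norm_num)
      have h3m : Real.sqrt 3 * Real.sqrt 3 = 3 := Real.mul_self_sqrt (by norm_num)
      have hs : Real.sqrt 3 * Real.sqrt (2/3) * (Real.sqrt 3 * Real.sqrt (2/3)) = 2 := by
        rw [mul_mul_mul_comm, h3m, Real.mul_self_sqrt (by norm_num)]; norm_num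
      field_simp
      nlinarith [h2m, h3m, hs]
    rw [key, show (4:ℝ)/9 = (2/3)^2 by norm_num, Real.sqrt_sq (by norm_num)]
    norm_num
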